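/- arXiv:1310.8424 — 2 statements merged into one kernel-verified Lean document; each statement's English description precedes it below -/
import Mathlib

section
/- Let V be a real vector space with a symmetric multilinear form deg on (d+1)-tuples, and suppose a 'Hodge index' property holds: for any elements D, E, H_2, ..., H_d of a cone N of 'nef' elements with all relevant intersection numbers positive, if deg(F, E, H_1, ..., H_{d-1}) = 0 for F = deg(E,E,H_2,...,H_d)·D − deg(D,E,H_2,...,H_d)·E then deg(F,F,H_2,...,H_d) ≤ 0. Then for all such D, E, H_2, ..., H_d one has deg(D,E,H_2,...,H_d)^2 ≥ deg(D,D,H_2,...,H_d)·deg(E,E,H_2,...,H_d). -/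
/-- The tuple `(D, E, H 0, ..., H (d-2))` of length `d+1`. -/
def tup {V : Type*} (d : ℕ) (D E : V) (H : Fin (d-1) → V) : Fin (d+1) → V :=
  fun i =>
    if h0 : (i : ℕ) = 0 then D
    else if h1 : (i : ℕ) = 1 then E
    else H ⟨(i : ℕ) - 2, by have := i.isLt; omega⟩

lemma tup_upd {V : Type*} (d : ℕ) (D D' E : V) (H : Fin (d-1) → V) :
    Function.update (tup d D E H) 0 D' = tup d D' E H := by
  funext i
  rcases eq_or_ne i 0 with rfl | h
  · simp [tup]
  · have hv : (i : ℕ) ≠ 0 := fun hh => h (Fin.ext hh)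
    simp [Function.update, h, tup, hv]

lemma tup_swap {V : Type*} (d : ℕ) (hd : 1 ≤ d) (D E : V) (H : Fin (d-1) → V) :
    (tup d E D H) ∘ (Equiv.swap 0 1) = tup d D E H := by
  have h01 : ((1 : Fin (d+1)) : ℕ) = 1 := by
    simp [Fin.val_one']; omega
  funext i
  rcases eq_or_ne i 0 with rfl | h0
  · show tup d E D H (Equiv.swap 0 1 0) = _
    rw [Equiv.swap_apply_left]
    simp only [tup, h01, Fin.val_zero]
    norm_num
  · rcases eq_or_ne i 1 with rfl | h1
    · show tup d E D H (Equiv.swap 0 1 1) = _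
      rw [Equiv.swap_apply_right]
      simp only [tup, h01, Fin.val_zero]
      norm_num
    · have hv0 : (i : ℕ) ≠ 0 := fun hh => h0 (Fin.ext hh)
      have hv1 : (i : ℕ) ≠ 1 := fun hh => h1 (Fin.ext (by rw [hh, h01]))
      simp [Equiv.swap_apply_of_ne_of_ne h0 h1, tup, hv0, hv1]

theorem stmt_0 {V : Type*} [AddCommGroup V] [Module ℝ V] (d : ℕ) (hd : 1 ≤ d)
    (deg : MultilinearMap ℝ (fun _ : Fin (d+1) => V) ℝ)
    (hsym : ∀ (σ : Equiv.Perm (Fin (d+1))) (v : Fin (d+1) → V), deg (v ∘ σ) = deg v)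
    (N : Set V)
    (hNadd : ∀ x ∈ N, ∀ y ∈ N, x + y ∈ N)
    (hNsmul : ∀ x ∈ N, ∀ c : ℝ, 0 ≤ c → c • x ∈ N)
    (hodge : ∀ D ∈ N, ∀ E ∈ N, ∀ H : Fin (d-1) → V, (∀ i, H i ∈ N) →
      0 < deg (tup d D D H) → 0 < deg (tup d E E H) → 0 < deg (tup d D E H) →
      deg (tup d (deg (tup d E E H) • D - deg (tup d D E H) • E) E H) = 0 →
      deg (tup d (deg (tup d E E H) • D - deg (tup d D E H) • E)
            (deg (tup d E E H) • D - deg (tup d D E H) • E) H) ≤ 0) :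
    ∀ D ∈ N, ∀ E ∈ N, ∀ H : Fin (d-1) → V, (∀ i, H i ∈ N) →
      0 < deg (tup d D D H) → 0 < deg (tup d E E H) → 0 < deg (tup d D E H) →
      deg (tup d D E H) ^ 2 ≥ deg (tup d D D H) * deg (tup d E E H) := by
  intro D hD E hE H hH hDD hEE hDE
  -- linearity in first slot
  have lin : ∀ (x y : V) (a b : ℝ) (E' : V),
      deg (tup d (a • x - b • y) E' H) = a * deg (tup d x E' H) - b * deg (tup d y E' H) := by
    intro x y a b E'
    have h1 : deg (tup d (a • x - b • y) E' H)
        = deg (tup d (a • x) E' H) - deg (tup d (b • y) E' H) := by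
      rw [← tup_upd d x (a • x - b • y) E' H, ← tup_upd d x (a • x) E' H,
        ← tup_upd d x (b • y) E' H]
      exact deg.map_update_sub _ 0 _ _
    rw [h1, ← tup_upd d x (a • x) E' H, ← tup_upd d y (b • y) E' H,
      deg.map_update_smul _ 0, deg.map_update_smul _ 0, tup_upd, tup_upd]
    simp [smul_eq_mul]
  have swap : ∀ x y : V, deg (tup d x y H) = deg (tup d y x H) := by
    intro x y
    rw [← tup_swap d hd x y H, hsym]
  set a := deg (tup d E E H) with ha
  set b := deg (tup d D E H) with hb
  set F := a • D - b • E with hF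
  have hFE : deg (tup d F E H) = 0 := by
    rw [hF, lin]; ring
  have key := hodge D hD E hE H hH hDD hEE hDE hFE
  have hFF : deg (tup d F F H) = a * (a * deg (tup d D D H) - b * b) := by
    rw [hF, lin, swap _ (a • D - b • E), lin, swap _ (a • D - b • E), lin,
      swap E D]
    ring
  rw [hFF] at key
  have : a * deg (tup d D D H) ≤ b * b := by nlinarith
  nlinarith
end

section
/- Let d ≥ 1 and let a : {0,...,d+1} → ℝ_{>0} be a positive sequence that is log-concave (a(i)² ≥ a(i−1)·a(i+1) for 1 ≤ i ≤ d) and satisfies a(d)^{d+1} = a(d+1)^d · a(0) (equality at i = d of the interpolation bound, with A := a(d+1), B := a(0)). If moreover a(i)^{d+1} ≥ A^i · B^{d+1−i} for all i, then a(i)^{d+1} = A^i · B^{d+1−i} for every 0 ≤ i ≤ d+1. -/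
theorem stmt_10 (d : ℕ) (hd : 1 ≤ d) (a : ℕ → ℝ)
    (hpos : ∀ i ≤ d + 1, 0 < a i)
    (hlc : ∀ i, 1 ≤ i → i ≤ d → a i ^ 2 ≥ a (i-1) * a (i+1))
    (heq : a d ^ (d+1) = a (d+1) ^ d * a 0)
    (hlb : ∀ i ≤ d + 1, a i ^ (d+1) ≥ a (d+1) ^ i * a 0 ^ (d+1-i)) :
    ∀ i ≤ d + 1, a i ^ (d+1) = a (d+1) ^ i * a 0 ^ (d+1-i) := by
  have hA : 0 < a (d+1) := hpos _ le_rfl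
  have hB : 0 < a 0 := hpos 0 (by omega)
  have key : ∀ j, j ≤ d + 1 → a (d+1-j) ^ (d+1) = a (d+1) ^ (d+1-j) * a 0 ^ j := by
    intro j
    induction j using Nat.strong_induction_on with
    | _ j ih =>
      intro hj
      match j, hj with
      | 0, _ => simp
      | 1, _ =>
        have h1 : d + 1 - 1 = d := by omega
        rw [h1, pow_one]; exact heq
      | (k+2), hj =>
        set i := d - 1 - k with hi
        have e1k : d + 1 - (k+1) = i + 1 := by omega
        have e2k : d + 1 - k = i + 2 := by omega
        have e0k : d + 1 - (k+2) = i := by omega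
        have e1 := ih (k+1) (by omega) (by omega)
        have e2 := ih k (by omega) (by omega)
        rw [e1k] at e1
        rw [e2k] at e2
        rw [e0k]
        have hlc' : a i * a (i+2) ≤ a (i+1) ^ 2 := by
          have := hlc (i+1) (by omega) (by omega)
          simpa using this
        have hi0 : 0 < a i := hpos i (by omega)
        have hi2 : 0 < a (i+2) := hpos (i+2) (by omega)
        have hle : a i ^ (d+1) * a (i+2) ^ (d+1) ≤ (a (i+1) ^ 2) ^ (d+1) := by
          rw [← mul_pow]
          exact pow_le_pow_left₀ (by positivity) hlc' _
        rw [← pow_mul, mul_comm 2, pow_mul, e1, e2] at hle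
        have hfact : (a (d+1) ^ (i+1) * a 0 ^ (k+1)) ^ 2
            = (a (d+1) ^ i * a 0 ^ (k+2)) * (a (d+1) ^ (i+2) * a 0 ^ k) := by ring
        rw [hfact] at hle
        have hpos2 : 0 < a (d+1) ^ (i+2) * a 0 ^ k := by positivity
        have hle2 : a i ^ (d+1) ≤ a (d+1) ^ i * a 0 ^ (k+2) :=
          le_of_mul_le_mul_right hle hpos2
        have hge := hlb i (by omega)
        have hik : d + 1 - i = k + 2 := by omega
        rw [hik] at hge
        exact le_antisymm hle2 hge
  intro i hi
  have h := key (d+1-i) (by omega)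
  have h1 : d + 1 - (d+1-i) = i := by omega
  rwa [h1] at h
end
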